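/- Let α > 2 and δ > 0 be real numbers, and define u(x) = (α/2)·(x/δ) - (1 + x/δ)·ln(1 + x/δ) for x > 0. Then there exists a unique x* > 0 with u(x*) = 0; moreover u(x) > 0 for all 0 < x < x* and u(x) < 0 for all x > x*. -/

import Mathlib

open Real

lemma aux_sign (c : ℝ) (hc : 1 < c) :
    ∃ s0 : ℝ, 1 < s0 ∧ c * (s0 - 1) - s0 * Real.log s0 = 0 ∧
      (∀ s : ℝ, 1 < s → c * (s - 1) - s * Real.log s = 0 → s = s0) ∧
      (∀ s : ℝ, 1 < s → s < s0 → 0 < c * (s - 1) - s * Real.log s) ∧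
      (∀ s : ℝ, s0 < s → c * (s - 1) - s * Real.log s < 0) := by
  set f : ℝ → ℝ := fun s => c * (s - 1) - s * Real.log s with hf
  have hderiv : ∀ s : ℝ, 0 < s → HasDerivAt f (c - 1 - Real.log s) s := by
    intro s hs
    have h1 : HasDerivAt (fun s : ℝ => c * (s - 1)) c s := by
      simpa using ((hasDerivAt_id s).sub_const 1).const_mul c
    have h2 : HasDerivAt (fun s : ℝ => s * Real.log s) (Real.log s + 1) s :=
      Real.hasDerivAt_mul_log hs.ne'
    have := h1.sub h2
    rw [show c - 1 - Real.log s = c - (Real.log s + 1) by ring]; exact this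
  set m : ℝ := Real.exp (c - 1) with hm
  have hm1 : 1 < m := by
    rw [hm]; have : (0:ℝ) < c - 1 := by linarith
    calc (1:ℝ) = Real.exp 0 := by simp
      _ < Real.exp (c - 1) := Real.exp_lt_exp.mpr this
  have hmpos : 0 < m := lt_trans one_pos hm1
  have hlogm : Real.log m = c - 1 := by rw [hm, Real.log_exp]
  -- strict mono on [1, m]
  have hmono : StrictMonoOn f (Set.Icc 1 m) := by
    apply strictMonoOn_of_deriv_pos (convex_Icc 1 m)
    · intro s hs
      exact (hderiv s (lt_of_lt_of_le one_pos hs.1)).continuousAt.continuousWithinAt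
    · intro s hs
      rw [interior_Icc] at hs
      have hs0 : 0 < s := lt_trans one_pos hs.1
      rw [(hderiv s hs0).deriv]
      have : Real.log s < Real.log m := Real.log_lt_log hs0 hs.2
      rw [hlogm] at this; linarith
  -- strict anti on [m, ∞)
  have hanti : StrictAntiOn f (Set.Ici m) := by
    apply strictAntiOn_of_deriv_neg (convex_Ici m)
    · intro s hs
      exact (hderiv s (lt_of_lt_of_le hmpos hs)).continuousAt.continuousWithinAt
    · intro s hs
      rw [interior_Ici] at hs
      rw [(hderiv s (lt_trans hmpos hs)).deriv]
      have : Real.log m < Real.log s := Real.log_lt_log hmpos hs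
      rw [hlogm] at this; linarith
  have hf1 : f 1 = 0 := by simp [hf]
  have hfm : 0 < f m := by
    have : f m = m - c := by
      simp only [hf]; rw [hlogm]; ring
    rw [this]
    have := Real.add_one_lt_exp (x := c - 1) (by linarith)
    rw [← hm] at this; linarith
  -- point where f negative: s = exp c
  set b : ℝ := Real.exp c with hb
  have hmb : m < b := Real.exp_lt_exp.mpr (by linarith)
  have hfb : f b < 0 := by
    simp only [hf, hb, Real.log_exp]
    have h1 : 0 < Real.exp c := Real.exp_pos c
    nlinarith
  -- IVT on [m, b]
  have hcont : ContinuousOn f (Set.Icc m b) := by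
    intro s hs
    exact (hderiv s (lt_of_lt_of_le hmpos hs.1)).continuousAt.continuousWithinAt
  have hiv := intermediate_value_Icc' (le_of_lt hmb) hcont
  have h0mem : (0:ℝ) ∈ Set.Icc (f b) (f m) := ⟨le_of_lt hfb, le_of_lt hfm⟩
  obtain ⟨s0, hs0mem, hs0val⟩ := hiv h0mem
  have hs0m : m < s0 := by
    rcases lt_or_eq_of_le hs0mem.1 with h | h
    · exact h
    · exfalso; rw [h] at hfm; rw [hs0val] at hfm; exact lt_irrefl 0 hfm
  have hs01 : 1 < s0 := lt_trans hm1 hs0m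
  -- sign lemmas
  have hpos : ∀ s : ℝ, 1 < s → s < s0 → 0 < f s := by
    intro s hs1 hss0
    rcases le_or_gt s m with h | h
    · have := hmono (Set.left_mem_Icc.mpr (le_of_lt hm1)) ⟨le_of_lt hs1, h⟩ hs1
      rw [hf1] at this; exact this
    · have := hanti (Set.mem_Ici.mpr (le_of_lt h)) (Set.mem_Ici.mpr (le_of_lt hs0m)) hss0
      rw [hs0val] at this; exact this
  have hneg : ∀ s : ℝ, s0 < s → f s < 0 := by
    intro s hs
    have := hanti (Set.mem_Ici.mpr (le_of_lt hs0m)) (Set.mem_Ici.mpr (le_of_lt (lt_trans hs0m hs))) hs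
    rw [hs0val] at this; exact this
  refine ⟨s0, hs01, hs0val, ?_, hpos, hneg⟩
  intro s hs1 hsval
  rcases lt_trichotomy s s0 with h | h | h
  · exact absurd hsval (ne_of_gt (hpos s hs1 h))
  · exact h
  · exact absurd hsval (ne_of_lt (hneg s h))

/-- For `α > 2`, `δ > 0` and `u(x) = (α/2)(x/δ) - (1+x/δ)ln(1+x/δ)`,
there is a unique `x* > 0` with `u(x*) = 0`; moreover `u > 0` on `(0, x*)`
and `u < 0` on `(x*, ∞)`. -/
theorem stmt_4 (α δ : ℝ) (hα : 2 < α) (hδ : 0 < δ) :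
    ∃ x0 : ℝ, 0 < x0 ∧
      (α / 2) * (x0 / δ) - (1 + x0 / δ) * Real.log (1 + x0 / δ) = 0 ∧
      (∀ x : ℝ, 0 < x →
        (α / 2) * (x / δ) - (1 + x / δ) * Real.log (1 + x / δ) = 0 → x = x0) ∧
      (∀ x : ℝ, 0 < x → x < x0 →
        0 < (α / 2) * (x / δ) - (1 + x / δ) * Real.log (1 + x / δ)) ∧
      (∀ x : ℝ, x0 < x →
        (α / 2) * (x / δ) - (1 + x / δ) * Real.log (1 + x / δ) < 0) := by
  have hc : 1 < α / 2 := by linarith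
  obtain ⟨s0, hs01, hval, huniq, hpos, hneg⟩ := aux_sign (α / 2) hc
  have hδ' : δ ≠ 0 := hδ.ne'
  -- key rewriting: for any x, with s = 1 + x/δ, expression = f s
  have key : ∀ x : ℝ, (α / 2) * (x / δ) - (1 + x / δ) * Real.log (1 + x / δ)
      = (α / 2) * ((1 + x / δ) - 1) - (1 + x / δ) * Real.log (1 + x / δ) := by
    intro x; ring_nf
  refine ⟨δ * (s0 - 1), by nlinarith, ?_, ?_, ?_, ?_⟩
  · have h1 : 1 + δ * (s0 - 1) / δ = s0 := by field_simp; ring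
    rw [key, h1]; exact hval
  · intro x hx hxval
    have hs1 : 1 < 1 + x / δ := by
      have : 0 < x / δ := div_pos hx hδ; linarith
    have := huniq (1 + x / δ) hs1 (by rw [← key]; exact hxval)
    have hx' : x / δ = s0 - 1 := by linarith
    field_simp at hx'
    linarith [hx']
  · intro x hx hxlt
    have hs1 : 1 < 1 + x / δ := by
      have : 0 < x / δ := div_pos hx hδ; linarith
    have hs2 : 1 + x / δ < s0 := by
      have : x / δ < s0 - 1 := by
        rw [div_lt_iff₀ hδ]
        calc x < δ * (s0 - 1) := hxlt
          _ = (s0 - 1) * δ := by ring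
      linarith
    rw [key]; exact hpos _ hs1 hs2
  · intro x hx
    have hs2 : s0 < 1 + x / δ := by
      have : s0 - 1 < x / δ := by
        rw [lt_div_iff₀ hδ]
        calc (s0 - 1) * δ = δ * (s0 - 1) := by ring
          _ < x := hx
      linarith
    rw [key]; exact hneg _ hs2
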